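/- arXiv:2310.01820 — 3 statements merged into one kernel-verified Lean document; each statement's English description precedes it below -/
import Mathlib

section
/- For a discrete random variable Y taking values in a finite set 𝒴 and an estimator Ŷ with error probability ε = P(Ŷ ≠ Y), the conditional entropy satisfies H(Y|Ŷ) ≤ h_b(ε) + ε·log(|𝒴| − 1), where h_b is the binary entropy function (Fano's inequality). -/
open Real Finset
open scoped Classical

noncomputable section

/-- Probability of an event under a pmf `p` on a finite sample space. -/
def prob {Ω : Type*} [Fintype Ω] (p : Ω → ℝ) (A : Ω → Prop) : ℝ :=
  ∑ ω ∈ Finset.univ.filter (fun ω => A ω), p ω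

/-- Pushforward distribution of a random variable `X` under pmf `p`. -/
def dist' {Ω α : Type*} [Fintype Ω] (p : Ω → ℝ) (X : Ω → α) : α → ℝ :=
  fun a => ∑ ω ∈ Finset.univ.filter (fun ω => X ω = a), p ω

/-- Shannon entropy of a pmf on a finite alphabet (with `0 log 0 = 0`). -/
def entFun {α : Type*} [Fintype α] (q : α → ℝ) : ℝ := -∑ a, q a * Real.log (q a)

/-- Entropy `H(X)` of a random variable. -/
def ent {Ω α : Type*} [Fintype Ω] [Fintype α] (p : Ω → ℝ) (X : Ω → α) : ℝ :=
  entFun (dist' p X)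

/-- Conditional entropy `H(X | Z) = H(X, Z) - H(Z)`. -/
def condEnt {Ω α β : Type*} [Fintype Ω] [Fintype α] [Fintype β]
    (p : Ω → ℝ) (X : Ω → α) (Z : Ω → β) : ℝ :=
  ent p (fun ω => (X ω, Z ω)) - ent p Z

/-- Mutual information `I(X; Z) = H(X) - H(X | Z)`. -/
def mutInf {Ω α β : Type*} [Fintype Ω] [Fintype α] [Fintype β]
    (p : Ω → ℝ) (X : Ω → α) (Z : Ω → β) : ℝ :=
  ent p X - condEnt p X Z

/-- Conditional mutual information `I(X; Z | W) = H(X | W) - H(X | Z, W)`. -/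
def condMI {Ω α β γ : Type*} [Fintype Ω] [Fintype α] [Fintype β] [Fintype γ]
    (p : Ω → ℝ) (X : Ω → α) (Z : Ω → β) (W : Ω → γ) : ℝ :=
  condEnt p X W - condEnt p X (fun ω => (Z ω, W ω))

/-- `p` is a probability mass function. -/
def IsPMF {Ω : Type*} [Fintype Ω] (p : Ω → ℝ) : Prop :=
  (∀ ω, 0 ≤ p ω) ∧ ∑ ω, p ω = 1

/-- Binary entropy function (with the convention `0 log 0 = 0`). -/
def binEnt (x : ℝ) : ℝ := -x * Real.log x - (1 - x) * Real.log (1 - x)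

/-- **Fano's inequality.** -/
theorem fano_inequality {Ω 𝒴 : Type*} [Fintype Ω] [Fintype 𝒴]
    (p : Ω → ℝ) (hp : IsPMF p) (Y Yhat : Ω → 𝒴)
    (hcard : 2 ≤ Fintype.card 𝒴)
    (ε : ℝ) (hε : ε = prob p (fun ω => Yhat ω ≠ Y ω)) :
    condEnt p Y Yhat ≤ binEnt ε + ε * Real.log ((Fintype.card 𝒴 : ℝ) - 1) := by
  classical
  obtain ⟨hp0, hp1⟩ := hp
  set M : ℝ := (Fintype.card 𝒴 : ℝ) with hMdef
  have hM1 : (1:ℝ) ≤ M - 1 := by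
    have : (2:ℝ) ≤ M := by rw [hMdef]; exact_mod_cast hcard
    linarith
  have hMpos : (0:ℝ) < M - 1 := by linarith
  have hMne : M - 1 ≠ 0 := ne_of_gt hMpos
  set r : 𝒴 × 𝒴 → ℝ := dist' p (fun ω => (Y ω, Yhat ω)) with hrdef
  set s : 𝒴 → ℝ := dist' p Yhat with hsdef
  have hr0 : ∀ a, 0 ≤ r a := fun a => Finset.sum_nonneg (fun ω _ => hp0 ω)
  have hs0 : ∀ b, 0 ≤ s b := fun b => Finset.sum_nonneg (fun ω _ => hp0 ω)
  -- fiberwise key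
  have key : ∀ (t : Finset (𝒴 × 𝒴)), ∑ a ∈ t, r a
      = ∑ ω ∈ Finset.univ.filter (fun ω => (Y ω, Yhat ω) ∈ t), p ω := by
    intro t
    have h := Finset.sum_fiberwise_eq_sum_filter Finset.univ t (fun ω => (Y ω, Yhat ω)) p
    rw [hrdef]
    simp only [dist']
    convert h using 2 <;> congr
  have hsum1 : ∑ a, r a = 1 := by
    have := key Finset.univ
    simpa [hp1] using this
  have hεeq : ∑ a ∈ Finset.univ.filter (fun a : 𝒴 × 𝒴 => a.1 ≠ a.2), r a = ε := by
    rw [key, hε, prob]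
    congr 1
    ext ω
    simp [ne_comm]
  have hε0 : 0 ≤ ε := by
    rw [← hεeq]; exact Finset.sum_nonneg fun a _ => hr0 a
  have hε1 : ε ≤ 1 := by
    rw [← hεeq, ← hsum1]
    exact Finset.sum_le_sum_of_subset_of_nonneg (Finset.filter_subset _ _)
      (fun a _ _ => hr0 a)
  have hdiag : ∑ a ∈ Finset.univ.filter (fun a : 𝒴 × 𝒴 => a.1 = a.2), r a = 1 - ε := by
    have h := Finset.sum_filter_add_sum_filter_not Finset.univ
      (fun a : 𝒴 × 𝒴 => a.1 = a.2) r
    rw [hsum1] at h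
    have h2 : ∑ a ∈ Finset.univ.filter (fun a : 𝒴 × 𝒴 => ¬ a.1 = a.2), r a = ε := hεeq
    linarith
  -- marginal
  have hmarg : ∀ b, ∑ y, r (y, b) = s b := by
    intro b
    have h1 : ∑ a ∈ Finset.univ.filter (fun a : 𝒴 × 𝒴 => a.2 = b), r a = ∑ y, r (y, b) := by
      rw [Finset.sum_filter, Fintype.sum_prod_type]
      simp
    have h2 := key (Finset.univ.filter (fun a : 𝒴 × 𝒴 => a.2 = b))
    rw [h1] at h2
    rw [h2, hsdef]
    simp only [dist']
    congr 1
    ext ω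
    simp
  have hstot : ∑ b, s b = 1 := by
    rw [← hsum1, Fintype.sum_prod_type_right]
    exact Finset.sum_congr rfl fun b _ => (hmarg b).symm
  -- Fano comparison distribution
  set q : 𝒴 × 𝒴 → ℝ := fun a => if a.1 = a.2 then 1 - ε else ε / (M - 1) with hqdef
  have hq0 : ∀ a, 0 ≤ q a := by
    intro a; rw [hqdef]; dsimp only
    split
    · linarith
    · positivity
  have hqsum : ∀ b, ∑ y, q (y, b) = 1 := by
    intro b
    have : ∑ y, q (y, b) = ∑ y, (if y = b then 1 - ε else ε / (M - 1)) := rfl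
    rw [this, ← Finset.add_sum_erase _ _ (Finset.mem_univ b)]
    rw [if_pos rfl]
    have hconst : ∑ y ∈ Finset.univ.erase b, (if y = b then 1 - ε else ε / (M - 1))
        = (Fintype.card 𝒴 - 1 : ℕ) * (ε / (M - 1)) := by
      rw [Finset.sum_congr rfl (fun y hy => if_neg (Finset.ne_of_mem_erase hy))]
      rw [Finset.sum_const, Finset.card_erase_of_mem (Finset.mem_univ b), Finset.card_univ,
        nsmul_eq_mul]
    rw [hconst]
    have hcast : ((Fintype.card 𝒴 - 1 : ℕ) : ℝ) = M - 1 := by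
      rw [Nat.cast_sub (by omega)]; simp [hMdef]
    rw [hcast]
    field_simp
    ring
  -- positivity on support
  have hpos : ∀ a, 0 < r a → 0 < s a.2 * q a := by
    intro a ha
    have hsa : r a ≤ s a.2 := by
      rw [← hmarg a.2]
      exact Finset.single_le_sum (fun y _ => hr0 (y, a.2)) (Finset.mem_univ a.1)
    have hspos : 0 < s a.2 := lt_of_lt_of_le ha hsa
    have hqpos : 0 < q a := by
      rw [hqdef]; dsimp only
      by_cases h : a.1 = a.2
      · rw [if_pos h]
        have : r a ≤ 1 - ε := by
          rw [← hdiag]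
          exact Finset.single_le_sum (fun x _ => hr0 x)
            (Finset.mem_filter.2 ⟨Finset.mem_univ a, h⟩)
        linarith
      · rw [if_neg h]
        have : r a ≤ ε := by
          rw [← hεeq]
          exact Finset.single_le_sum (fun x _ => hr0 x)
            (Finset.mem_filter.2 ⟨Finset.mem_univ a, h⟩)
        have : 0 < ε := lt_of_lt_of_le ha this
        positivity
    exact mul_pos hspos hqpos
  -- Gibbs inequality
  have gibbs : ∑ a, r a * (Real.log (s a.2 * q a) - Real.log (r a)) ≤ 0 := by
    have hterm : ∀ a : 𝒴 × 𝒴, r a * (Real.log (s a.2 * q a) - Real.log (r a))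
        ≤ s a.2 * q a - r a := by
      intro a
      rcases eq_or_lt_of_le (hr0 a) with h | h
      · rw [← h]
        simp [mul_nonneg (hs0 a.2) (hq0 a)]
      · have hsq := hpos a h
        rw [← Real.log_div (ne_of_gt hsq) (ne_of_gt h)]
        calc r a * Real.log (s a.2 * q a / r a)
            ≤ r a * (s a.2 * q a / r a - 1) := by
              apply mul_le_mul_of_nonneg_left
                (Real.log_le_sub_one_of_pos (div_pos hsq h)) (le_of_lt h)
          _ = s a.2 * q a - r a := by field_simp
    calc ∑ a, r a * (Real.log (s a.2 * q a) - Real.log (r a))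
        ≤ ∑ a : 𝒴 × 𝒴, (s a.2 * q a - r a) := Finset.sum_le_sum fun a _ => hterm a
      _ = (∑ a : 𝒴 × 𝒴, s a.2 * q a) - 1 := by rw [Finset.sum_sub_distrib, hsum1]
      _ = 0 := by
          have : ∑ a : 𝒴 × 𝒴, s a.2 * q a = 1 := by
            rw [Fintype.sum_prod_type_right]
            have : ∀ b : 𝒴, ∑ y, s b * q (y, b) = s b := by
              intro b
              rw [← Finset.mul_sum, hqsum b, mul_one]
            rw [Finset.sum_congr rfl (fun b _ => this b), hstot]
          rw [this]; ring
  -- express condEnt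
  have hce : condEnt p Y Yhat = ∑ a, r a * (Real.log (s a.2) - Real.log (r a)) := by
    rw [condEnt, ent, ent, entFun, entFun, ← hrdef, ← hsdef]
    have h1 : ∑ b, s b * Real.log (s b) = ∑ a : 𝒴 × 𝒴, r a * Real.log (s a.2) := by
      rw [Fintype.sum_prod_type_right]
      apply Finset.sum_congr rfl
      intro b _
      calc s b * Real.log (s b) = ∑ y, r (y, b) * Real.log (s b) := by
            rw [← Finset.sum_mul, hmarg b]
        _ = ∑ y, r (y, b) * Real.log (s (y, b).2) := rfl
    rw [h1]
    simp only [mul_sub, Finset.sum_sub_distrib]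
    ring
  -- combine
  have hmain : condEnt p Y Yhat ≤ -∑ a, r a * Real.log (q a) := by
    rw [hce]
    have heq : ∀ a : 𝒴 × 𝒴, r a * (Real.log (s a.2) - Real.log (r a)) + r a * Real.log (q a)
        = r a * (Real.log (s a.2 * q a) - Real.log (r a)) := by
      intro a
      rcases eq_or_lt_of_le (hr0 a) with h | h
      · rw [← h]; ring
      · have hsq := hpos a h
        have hsp : 0 < s a.2 := lt_of_lt_of_le h (by
          rw [← hmarg a.2]
          exact Finset.single_le_sum (fun y _ => hr0 (y, a.2)) (Finset.mem_univ a.1))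
        have hqp : 0 < q a := by
          by_contra hq
          push_neg at hq
          nlinarith
        rw [Real.log_mul (ne_of_gt hsp) (ne_of_gt hqp)]
        ring
    have := gibbs
    rw [← Finset.sum_congr rfl (fun a _ => heq a)] at this
    rw [Finset.sum_add_distrib] at this
    linarith
  refine hmain.trans (le_of_eq ?_)
  -- compute -∑ r log q
  have hsplit : ∑ a, r a * Real.log (q a)
      = (1 - ε) * Real.log (1 - ε) + ε * Real.log (ε / (M - 1)) := by
    rw [← Finset.sum_filter_add_sum_filter_not Finset.univ (fun a : 𝒴 × 𝒴 => a.1 = a.2)]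
    have h1 : ∑ a ∈ Finset.univ.filter (fun a : 𝒴 × 𝒴 => a.1 = a.2), r a * Real.log (q a)
        = (1 - ε) * Real.log (1 - ε) := by
      have hc : ∀ a ∈ Finset.univ.filter (fun a : 𝒴 × 𝒴 => a.1 = a.2),
          r a * Real.log (q a) = r a * Real.log (1 - ε) := by
        intro a ha
        have h := (Finset.mem_filter.1 ha).2
        simp only [hqdef, if_pos h]
      rw [Finset.sum_congr rfl hc, ← Finset.sum_mul, hdiag]
    have h2 : ∑ a ∈ Finset.univ.filter (fun a : 𝒴 × 𝒴 => ¬ a.1 = a.2), r a * Real.log (q a)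
        = ε * Real.log (ε / (M - 1)) := by
      have hc : ∀ a ∈ Finset.univ.filter (fun a : 𝒴 × 𝒴 => ¬ a.1 = a.2),
          r a * Real.log (q a) = r a * Real.log (ε / (M - 1)) := by
        intro a ha
        have h := (Finset.mem_filter.1 ha).2
        simp only [hqdef, if_neg h]
      rw [Finset.sum_congr rfl hc, ← Finset.sum_mul, hεeq]
    rw [h1, h2]
  rw [hsplit]
  have hlogdiv : ε * Real.log (ε / (M - 1)) = ε * Real.log ε - ε * Real.log (M - 1) := by
    rcases eq_or_lt_of_le hε0 with h | h
    · rw [← h]; simp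
    · rw [Real.log_div (ne_of_gt h) hMne]; ring
  rw [binEnt, hlogdiv]
  ring
end
end

section
/- (Reverse Fano / Kovalevsky bound) Let Y take values in a finite set and Z be any random variable, and let ε be the minimum error probability P(g(Z) ≠ Y) over all deterministic decoders g. Then H(Y|Z) ≥ (1 − (1−ε)⌊1/(1−ε)⌋)(1 + ⌊1/(1−ε)⌋)·ln(1 + ⌊1/(1−ε)⌋) − (ε − (1−ε)⌊1/(1−ε)⌋)·⌊1/(1−ε)⌋·ln⌊1/(1−ε)⌋, for ε ∈ (0,1). -/
open Real Finset
open scoped Classical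

noncomputable section

def sk (k : ℕ) : ℝ := (k:ℝ) * ((k:ℝ)+1) * (Real.log ((k:ℝ)+1) - Real.log (k:ℝ))
def Ck (k : ℕ) : ℝ := ((k:ℝ)+1) * Real.log ((k:ℝ)+1) - (k:ℝ) * Real.log (k:ℝ)

lemma log_succ_sub_log_ge {k : ℕ} (hk : 1 ≤ k) :
    1/((k:ℝ)+1) ≤ Real.log ((k:ℝ)+1) - Real.log (k:ℝ) := by
  have hK : (1:ℝ) ≤ (k:ℝ) := by exact_mod_cast hk
  have hkpos : (0:ℝ) < k := by linarith
  have hx : (0:ℝ) < ((k:ℝ)+1)/(k:ℝ) := by positivity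
  have h := Real.one_sub_inv_le_log_of_pos hx
  rw [Real.log_div (by linarith) (by linarith)] at h
  have hinv : (((k:ℝ)+1)/(k:ℝ))⁻¹ = (k:ℝ)/((k:ℝ)+1) := by
    rw [inv_div]
  rw [hinv] at h
  have : 1 - (k:ℝ)/((k:ℝ)+1) = 1/((k:ℝ)+1) := by field_simp; ring
  linarith [this ▸ h]

lemma log_succ_sub_log_le {k : ℕ} (hk : 1 ≤ k) :
    Real.log ((k:ℝ)+1) - Real.log (k:ℝ) ≤ 1/(k:ℝ) := by
  have hK : (1:ℝ) ≤ (k:ℝ) := by exact_mod_cast hk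
  have hkpos : (0:ℝ) < k := by linarith
  have hx : (0:ℝ) < ((k:ℝ)+1)/(k:ℝ) := by positivity
  have h := Real.log_le_sub_one_of_pos hx
  rw [Real.log_div (by linarith) (by linarith)] at h
  have : ((k:ℝ)+1)/(k:ℝ) - 1 = 1/(k:ℝ) := by field_simp; ring
  linarith [this ▸ h]

lemma sk_lb {k : ℕ} (hk : 1 ≤ k) : (k:ℝ) ≤ sk k := by
  have hK : (1:ℝ) ≤ (k:ℝ) := by exact_mod_cast hk
  have h := log_succ_sub_log_ge hk
  have h2 : (k:ℝ) * (((k:ℝ)+1) * (1/((k:ℝ)+1))) ≤ (k:ℝ) * (((k:ℝ)+1) * (Real.log ((k:ℝ)+1) - Real.log (k:ℝ))) := by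
    apply mul_le_mul_of_nonneg_left _ (by linarith)
    apply mul_le_mul_of_nonneg_left h (by linarith)
  have h3 : ((k:ℝ)+1) * (1/((k:ℝ)+1)) = 1 := by field_simp
  rw [h3, mul_one] at h2
  unfold sk; linarith [h2]

lemma sk_ub {k : ℕ} (hk : 1 ≤ k) : sk k ≤ (k:ℝ) + 1 := by
  have hK : (1:ℝ) ≤ (k:ℝ) := by exact_mod_cast hk
  have h := log_succ_sub_log_le hk
  have h2 : (k:ℝ) * (((k:ℝ)+1) * (Real.log ((k:ℝ)+1) - Real.log (k:ℝ))) ≤ (k:ℝ) * (((k:ℝ)+1) * (1/(k:ℝ))) := by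
    apply mul_le_mul_of_nonneg_left _ (by linarith)
    apply mul_le_mul_of_nonneg_left h (by linarith)
  have h3 : (k:ℝ) * (((k:ℝ)+1) * (1/(k:ℝ))) = (k:ℝ)+1 := by field_simp
  rw [h3] at h2
  unfold sk; linarith [h2]

/-- L3: `C_k ≤ s_k / j + log j` for all integers `j, k ≥ 1`. -/
lemma gval {k : ℕ} (hk : 1 ≤ k) : ∀ {j : ℕ}, 1 ≤ j → Ck k ≤ sk k / (j:ℝ) + Real.log (j:ℝ) := by
  have hK : (1:ℝ) ≤ (k:ℝ) := by exact_mod_cast hk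
  -- value at j = k
  have atk : Ck k = sk k / (k:ℝ) + Real.log (k:ℝ) := by
    unfold Ck sk; field_simp; ring
  -- value at j = k+1
  have atk1 : Ck k = sk k / ((k:ℝ)+1) + Real.log ((k:ℝ)+1) := by
    unfold Ck sk; field_simp; ring
  -- downward step
  have step_down : ∀ j : ℕ, 1 ≤ j → j + 1 ≤ k →
      sk k / ((j:ℝ)+1) + Real.log ((j:ℝ)+1) ≤ sk k / (j:ℝ) + Real.log (j:ℝ) := by
    intro j hj hjk
    have hJ : (1:ℝ) ≤ (j:ℝ) := by exact_mod_cast hj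
    have hJK : (j:ℝ) + 1 ≤ (k:ℝ) := by exact_mod_cast hjk
    have hsj : sk j ≤ (j:ℝ) + 1 := sk_ub hj
    have hsk : (k:ℝ) ≤ sk k := sk_lb hk
    -- log (j+1) - log j ≤ sk k / (j(j+1))
    have key : Real.log ((j:ℝ)+1) - Real.log (j:ℝ) ≤ sk k / ((j:ℝ)*((j:ℝ)+1)) := by
      rw [le_div_iff₀ (by positivity)]
      have : (Real.log ((j:ℝ)+1) - Real.log (j:ℝ)) * ((j:ℝ)*((j:ℝ)+1)) = sk j := by
        unfold sk; ring
      rw [this]; linarith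
    have expand : sk k / (j:ℝ) - sk k / ((j:ℝ)+1) = sk k / ((j:ℝ)*((j:ℝ)+1)) := by
      field_simp; ring
    linarith
  -- upward step
  have step_up : ∀ j : ℕ, k + 1 ≤ j →
      sk k / (j:ℝ) + Real.log (j:ℝ) ≤ sk k / ((j:ℝ)+1) + Real.log ((j:ℝ)+1) := by
    intro j hjk
    have hj : 1 ≤ j := le_trans (Nat.le_add_left 1 k) hjk
    have hJ : (1:ℝ) ≤ (j:ℝ) := by exact_mod_cast hj
    have hJK : (k:ℝ) + 1 ≤ (j:ℝ) := by exact_mod_cast hjk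
    have hsj : (j:ℝ) ≤ sk j := sk_lb hj
    have hsk : sk k ≤ (k:ℝ) + 1 := sk_ub hk
    have key : sk k / ((j:ℝ)*((j:ℝ)+1)) ≤ Real.log ((j:ℝ)+1) - Real.log (j:ℝ) := by
      rw [div_le_iff₀ (by positivity)]
      have : (Real.log ((j:ℝ)+1) - Real.log (j:ℝ)) * ((j:ℝ)*((j:ℝ)+1)) = sk j := by
        unfold sk; ring
      rw [this]; linarith
    have expand : sk k / (j:ℝ) - sk k / ((j:ℝ)+1) = sk k / ((j:ℝ)*((j:ℝ)+1)) := by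
      field_simp; ring
    linarith
  -- below k : downward induction on distance
  have lo : ∀ d : ℕ, ∀ j : ℕ, 1 ≤ j → j + d = k → Ck k ≤ sk k / (j:ℝ) + Real.log (j:ℝ) := by
    intro d
    induction d with
    | zero => intro j hj hjd; simp at hjd; subst hjd; exact le_of_eq atk
    | succ n ih =>
      intro j hj hjd
      have h1 : (j+1) + n = k := by omega
      have h2 : j + 1 ≤ k := by omega
      have := ih (j+1) (by omega) h1
      have hs := step_down j hj h2
      push_cast at this hs ⊢
      linarith
  -- above k+1 : upward induction
  have hi : ∀ j : ℕ, k + 1 ≤ j → Ck k ≤ sk k / (j:ℝ) + Real.log (j:ℝ) := by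
    intro j hj
    induction j, hj using Nat.le_induction with
    | base => push_cast; linarith [atk1]
    | succ n hn ih =>
      have := step_up n hn
      push_cast at this ih ⊢
      linarith
  intro j hj
  rcases le_or_gt j k with h | h
  · obtain ⟨d, hd⟩ := Nat.le.dest h
    exact lo d j hj hd
  · exact hi j h

/-- Transfer lemma: moving mass from a smaller to a larger coordinate decreases entropy. -/
lemma transfer {a b δ : ℝ} (h0b : 0 ≤ b - δ) (hδ : 0 ≤ δ) (hba : b ≤ a) :
    Real.negMulLog (a+δ) + Real.negMulLog (b-δ) ≤ Real.negMulLog a + Real.negMulLog b := by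
  rcases eq_or_lt_of_le hδ with h | h
  · simp [← h]
  · set x := b - δ with hx
    set y := a + δ with hy
    have hyx : 0 < y - x := by simp [hx, hy]; linarith
    set t := δ / (y - x) with ht
    have ht0 : 0 ≤ t := by positivity
    have ht1 : t ≤ 1 := by rw [ht, div_le_one hyx]; simp [hx, hy]; linarith
    have hxmem : x ∈ Set.Ici (0:ℝ) := h0b
    have hymem : y ∈ Set.Ici (0:ℝ) := by simp [hy]; linarith
    have hconc := Real.concaveOn_negMulLog
    have ha : t * x + (1 - t) * y = a := by
      have : t * (y - x) = δ := by rw [ht]; field_simp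
      nlinarith [this]
    have hb : (1 - t) * x + t * y = b := by
      have : t * (y - x) = δ := by rw [ht]; field_simp
      nlinarith [this]
    have h1 := hconc.2 hxmem hymem ht0 (show (0:ℝ) ≤ 1 - t by linarith) (show t + (1 - t) = 1 by ring)
    have h2 := hconc.2 hxmem hymem (show (0:ℝ) ≤ 1 - t by linarith) ht0 (show (1 - t) + t = 1 by ring)
    simp only [smul_eq_mul] at h1 h2
    rw [ha] at h1
    rw [hb] at h2
    linarith

/-- L2: on the interval `[1/(j+1), 1/j]` the extremal entropy dominates the line. -/
lemma interval_bound {k j : ℕ} (hk : 1 ≤ k) (hj : 1 ≤ j) {m : ℝ}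
    (h1 : 1/((j:ℝ)+1) ≤ m) (h2 : m ≤ 1/(j:ℝ)) :
    Ck k - sk k * m ≤ (j:ℝ) * Real.negMulLog m + Real.negMulLog (1 - (j:ℝ)*m) := by
  have hJ : (1:ℝ) ≤ (j:ℝ) := by exact_mod_cast hj
  set F : ℝ → ℝ := fun x => (j:ℝ) * Real.negMulLog x + Real.negMulLog (1 - (j:ℝ)*x) + sk k * x with hF
  -- concavity of F on points of [1/(j+1), 1/j]
  have hconc := Real.concaveOn_negMulLog
  set a : ℝ := 1/((j:ℝ)+1) with hadef
  set b : ℝ := 1/(j:ℝ) with hbdef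
  have hab : a < b := by
    rw [hadef, hbdef, div_lt_div_iff₀ (by linarith) (by linarith)]
    linarith
  -- endpoint values
  have hFa : F a = Real.log ((j:ℝ)+1) + sk k / ((j:ℝ)+1) := by
    have h0 : 1 - (j:ℝ)*a = a := by rw [hadef]; field_simp; ring
    have h1 : Real.negMulLog a = a * Real.log ((j:ℝ)+1) := by
      rw [Real.negMulLog, hadef]
      rw [show (1:ℝ)/((j:ℝ)+1) = ((j:ℝ)+1)⁻¹ by ring, Real.log_inv]
      ring
    rw [hF]; simp only [h0, h1]
    rw [hadef]; field_simp
  have hFb : F b = Real.log (j:ℝ) + sk k / (j:ℝ) := by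
    have h0 : 1 - (j:ℝ)*b = 0 := by rw [hbdef]; field_simp; ring
    have h1 : Real.negMulLog b = b * Real.log (j:ℝ) := by
      rw [Real.negMulLog, hbdef]
      rw [show (1:ℝ)/(j:ℝ) = ((j:ℝ))⁻¹ by ring, Real.log_inv]
      ring
    rw [hF]; simp only [h0, h1, Real.negMulLog_zero]
    rw [hbdef]; field_simp; ring
  have hCa : Ck k ≤ F a := by rw [hFa]; have := gval hk (j := j+1) (by omega); push_cast at this ⊢; linarith
  have hCb : Ck k ≤ F b := by rw [hFb]; linarith [gval hk hj]
  -- write m as a convex combination of a and b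
  set t : ℝ := (b - m)/(b - a) with htdef
  have hba : 0 < b - a := by linarith
  have ht0 : 0 ≤ t := by apply div_nonneg; linarith; linarith
  have ht1 : t ≤ 1 := by rw [htdef, div_le_one hba]; linarith
  have hm : m = t * a + (1 - t) * b := by
    rw [htdef]; field_simp; ring
  -- concavity: F m ≥ t F a + (1-t) F b
  have hmem : ∀ x : ℝ, a ≤ x → x ∈ Set.Ici (0:ℝ) := by
    intro x hx; simp only [Set.mem_Ici]; have : (0:ℝ) < a := by rw [hadef]; positivity
    linarith
  have hamem := hmem a le_rfl
  have hbmem := hmem b (le_of_lt hab)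
  have h1mem : (1 - (j:ℝ)*a) ∈ Set.Ici (0:ℝ) := by
    simp only [Set.mem_Ici]
    have hja : (j:ℝ) * a = (j:ℝ)/((j:ℝ)+1) := by rw [hadef]; ring
    rw [hja, sub_nonneg, div_le_one (by linarith)]; linarith
  have h1bmem : (1 - (j:ℝ)*b) ∈ Set.Ici (0:ℝ) := by
    simp only [Set.mem_Ici]; rw [hbdef]
    have : (j:ℝ) * (1/(j:ℝ)) = 1 := by field_simp
    linarith
  have key1 := hconc.2 hamem hbmem ht0 (show (0:ℝ) ≤ 1 - t by linarith) (show t + (1-t) = 1 by ring)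
  have key2 := hconc.2 h1mem h1bmem ht0 (show (0:ℝ) ≤ 1 - t by linarith) (show t + (1-t) = 1 by ring)
  simp only [smul_eq_mul] at key1 key2
  have harg : t * (1 - (j:ℝ)*a) + (1-t) * (1 - (j:ℝ)*b) = 1 - (j:ℝ)*m := by
    rw [hm]; ring
  rw [harg] at key2
  have hFm : t * F a + (1 - t) * F b ≤ F m := by
    have hj0 : (0:ℝ) ≤ (j:ℝ) := by linarith
    have key1' := mul_le_mul_of_nonneg_left key1 hj0
    rw [← hm] at key1'
    have hsk : sk k * m = t*(sk k * a) + (1-t)*(sk k * b) := by rw [hm]; ring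
    show t * ((j:ℝ) * Real.negMulLog a + Real.negMulLog (1 - (j:ℝ)*a) + sk k * a)
        + (1-t) * ((j:ℝ) * Real.negMulLog b + Real.negMulLog (1 - (j:ℝ)*b) + sk k * b)
        ≤ (j:ℝ) * Real.negMulLog m + Real.negMulLog (1 - (j:ℝ)*m) + sk k * m
    nlinarith [key1', key2, hsk]
  have : Ck k ≤ F m := by
    calc Ck k = t * Ck k + (1-t) * Ck k := by ring
    _ ≤ t * F a + (1 - t) * F b := by
        apply add_le_add
        · exact mul_le_mul_of_nonneg_left hCa ht0
        · exact mul_le_mul_of_nonneg_left hCb (by linarith)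
    _ ≤ F m := hFm
  rw [hF] at this
  simp only [] at this
  linarith

lemma sum_diff_two {𝒴 : Type*} [Fintype 𝒴] (f g : 𝒴 → ℝ) {y₁ y₂ : 𝒴} (hne : y₁ ≠ y₂)
    (h : ∀ y, y ≠ y₁ → y ≠ y₂ → f y = g y) :
    ∑ y, f y = ∑ y, g y + (f y₁ - g y₁) + (f y₂ - g y₂) := by
  have h1 : ∑ y, (f y - g y) = ∑ y ∈ ({y₁, y₂} : Finset 𝒴), (f y - g y) := by
    symm
    apply Finset.sum_subset (Finset.subset_univ _)
    intro y _ hy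
    simp only [Finset.mem_insert, Finset.mem_singleton, not_or] at hy
    rw [h y hy.1 hy.2]; ring
  rw [Finset.sum_pair hne] at h1
  have h2 : ∑ y, (f y - g y) = ∑ y, f y - ∑ y, g y := Finset.sum_sub_distrib _ _
  linarith

/-- Base case: at most one coordinate is strictly between 0 and m. -/
lemma base_case {𝒴 : Type*} [Fintype 𝒴] {k : ℕ} (hk : 1 ≤ k) {m : ℝ}
    (hm0 : 0 < m) (hm1 : m ≤ 1) (q : 𝒴 → ℝ) (hq0 : ∀ y, 0 ≤ q y)
    (hq1 : ∑ y, q y = 1) (hqm : ∀ y, q y ≤ m)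
    (hnp : ∀ y₁ y₂ : 𝒴, y₁ ≠ y₂ → (0 < q y₁ ∧ q y₁ < m) → (0 < q y₂ ∧ q y₂ < m) → False) :
    Ck k - sk k * m ≤ ∑ y, Real.negMulLog (q y) := by
  set A : Finset 𝒴 := univ.filter (fun y => q y = m) with hA
  set j : ℕ := A.card with hj
  set B : Finset 𝒴 := univ.filter (fun y => ¬ q y = m) with hB
  set r : ℝ := ∑ y ∈ B, q y with hr
  -- the split
  have hsplitq : (j:ℝ) * m + r = 1 := by
    have := Finset.sum_filter_add_sum_filter_not univ (fun y => q y = m) q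
    have hAq : ∑ y ∈ A, q y = (j:ℝ) * m := by
      rw [hA, hj]
      rw [Finset.sum_congr rfl (fun y hy => (Finset.mem_filter.mp hy).2)]
      simp [mul_comm, hA]
    rw [hq1] at this
    rw [hA] at hAq
    rw [hr, hB]
    linarith [this, hAq]
  have hsplitH : ∑ y, Real.negMulLog (q y) = (j:ℝ) * Real.negMulLog m + ∑ y ∈ B, Real.negMulLog (q y) := by
    have := Finset.sum_filter_add_sum_filter_not univ (fun y => q y = m) (fun y => Real.negMulLog (q y))
    have hAH : ∑ y ∈ A, Real.negMulLog (q y) = (j:ℝ) * Real.negMulLog m := by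
      rw [hA, hj]
      rw [Finset.sum_congr rfl (fun y hy => by rw [(Finset.mem_filter.mp hy).2])]
      simp [mul_comm, hA]
    rw [← this, hA] at *
    rw [hAH]
  -- every y in B has q y = 0 or is interior; at most one interior
  have hBalt : ∀ y ∈ B, q y = 0 ∨ (0 < q y ∧ q y < m) := by
    intro y hy
    rw [hB, Finset.mem_filter] at hy
    rcases eq_or_lt_of_le (hq0 y) with h | h
    · left; exact h.symm
    · right; exact ⟨h, lt_of_le_of_ne (hqm y) hy.2⟩
  -- r and entropy over B
  have hBr : (0 ≤ r ∧ r ≤ m ∧ (r = 1 → False)) ∧ ∑ y ∈ B, Real.negMulLog (q y) = Real.negMulLog r := by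
    by_cases hS : ∃ y₀ ∈ B, 0 < q y₀ ∧ q y₀ < m
    · obtain ⟨y₀, hy₀B, hy₀⟩ := hS
      have hz : ∀ y ∈ B, y ≠ y₀ → q y = 0 := by
        intro y hy hne
        rcases hBalt y hy with h | h
        · exact h
        · exact absurd (hnp y y₀ hne h hy₀) (fun x => x)
      have hrq : r = q y₀ := by
        rw [hr]
        rw [Finset.sum_eq_single y₀ hz (fun h => absurd hy₀B h)]
      constructor
      · exact ⟨by rw [hrq]; exact le_of_lt hy₀.1, by rw [hrq]; exact le_of_lt hy₀.2,
          fun h => by rw [hrq] at h; linarith [hy₀.2, hm1]⟩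
      · rw [Finset.sum_eq_single y₀ (fun y hy hne => by rw [hz y hy hne]; simp)
          (fun h => absurd hy₀B h), hrq]
    · push_neg at hS
      have hz : ∀ y ∈ B, q y = 0 := by
        intro y hy
        rcases hBalt y hy with h | h
        · exact h
        · exact absurd h.2 (by simpa using hS y hy h.1)
      have hr0 : r = 0 := by rw [hr]; exact Finset.sum_eq_zero hz
      constructor
      · exact ⟨le_of_eq hr0.symm, by rw [hr0]; linarith, fun h => by rw [hr0] at h; linarith⟩
      · rw [hr0]
        simp only [Real.negMulLog_zero]
        exact Finset.sum_eq_zero (fun y hy => by rw [hz y hy]; simp)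
  obtain ⟨⟨hr0, hrm, hr1⟩, hBH⟩ := hBr
  -- j ≥ 1
  have hj1 : 1 ≤ j := by
    by_contra h
    push_neg at h
    interval_cases j
    · simp at hsplitq
      exact hr1 (by linarith)
  have hJ : (1:ℝ) ≤ (j:ℝ) := by exact_mod_cast hj1
  -- m range
  have hmub : m ≤ 1/(j:ℝ) := by
    rw [le_div_iff₀ (by linarith)]
    nlinarith
  have hmlb : 1/((j:ℝ)+1) ≤ m := by
    rw [div_le_iff₀ (by linarith)]
    nlinarith
  have := interval_bound hk hj1 hmlb hmub
  have hrm' : 1 - (j:ℝ)*m = r := by linarith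
  rw [hrm'] at this
  rw [hsplitH, hBH]
  exact this

/-- L1 : entropy of a pmf bounded above coordinatewise by `m` is at least `C_k - s_k m`. -/
lemma pmf_bound {𝒴 : Type*} [Fintype 𝒴] {k : ℕ} (hk : 1 ≤ k) {m : ℝ}
    (hm0 : 0 < m) (hm1 : m ≤ 1) (q : 𝒴 → ℝ) (hq0 : ∀ y, 0 ≤ q y)
    (hq1 : ∑ y, q y = 1) (hqm : ∀ y, q y ≤ m) :
    Ck k - sk k * m ≤ ∑ y, Real.negMulLog (q y) := by
  have aux : ∀ n : ℕ, ∀ q : 𝒴 → ℝ, (∀ y, 0 ≤ q y) → (∑ y, q y = 1) → (∀ y, q y ≤ m) →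
      (univ.filter (fun y => 0 < q y ∧ q y < m)).card ≤ n →
      Ck k - sk k * m ≤ ∑ y, Real.negMulLog (q y) := by
    intro n
    induction n with
    | zero =>
      intro q hq0 hq1 hqm hcard
      apply base_case hk hm0 hm1 q hq0 hq1 hqm
      intro y₁ y₂ hne h1 h2
      have hy₁ : y₁ ∈ univ.filter (fun y => 0 < q y ∧ q y < m) := by
        simp only [Finset.mem_filter, Finset.mem_univ, true_and]; exact h1
      have := Finset.card_eq_zero.mp (Nat.le_zero.mp hcard)
      rw [this] at hy₁
      exact absurd hy₁ (Finset.notMem_empty _)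
    | succ n IH =>
      intro q hq0 hq1 hqm hcard
      by_cases hex : ∃ y₁ y₂ : 𝒴, y₁ ≠ y₂ ∧ (0 < q y₁ ∧ q y₁ < m) ∧ (0 < q y₂ ∧ q y₂ < m) ∧ q y₂ ≤ q y₁
      · obtain ⟨y₁, y₂, hne, hi1, hi2, hle⟩ := hex
        set δ : ℝ := min (m - q y₁) (q y₂) with hδdef
        have hδ0 : 0 < δ := lt_min (by linarith [hi1.2]) hi2.1
        have hδ1 : δ ≤ m - q y₁ := min_le_left _ _
        have hδ2 : δ ≤ q y₂ := min_le_right _ _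
        set q' : 𝒴 → ℝ := Function.update (Function.update q y₁ (q y₁ + δ)) y₂ (q y₂ - δ) with hq'def
        have hq'1 : q' y₁ = q y₁ + δ := by
          rw [hq'def, Function.update_of_ne hne, Function.update_self]
        have hq'2 : q' y₂ = q y₂ - δ := by
          rw [hq'def, Function.update_self]
        have hq'o : ∀ y, y ≠ y₁ → y ≠ y₂ → q' y = q y := by
          intro y h1 h2
          rw [hq'def, Function.update_of_ne h2, Function.update_of_ne h1]
        -- conditions for q'
        have hq'0 : ∀ y, 0 ≤ q' y := by
          intro y
          by_cases h1 : y = y₁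
          · subst h1; rw [hq'1]; linarith [hi1.1]
          by_cases h2 : y = y₂
          · subst h2; rw [hq'2]; linarith
          · rw [hq'o y h1 h2]; exact hq0 y
        have hq'm : ∀ y, q' y ≤ m := by
          intro y
          by_cases h1 : y = y₁
          · subst h1; rw [hq'1]; linarith
          by_cases h2 : y = y₂
          · subst h2; rw [hq'2]; linarith [hi2.2]
          · rw [hq'o y h1 h2]; exact hqm y
        have hq'sum : ∑ y, q' y = 1 := by
          rw [sum_diff_two q' q hne hq'o, hq'1, hq'2, hq1]; ring
        -- entropy decreases
        have hent : ∑ y, Real.negMulLog (q' y) ≤ ∑ y, Real.negMulLog (q y) := by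
          rw [sum_diff_two (fun y => Real.negMulLog (q' y)) (fun y => Real.negMulLog (q y)) hne
            (fun y h1 h2 => by rw [hq'o y h1 h2])]
          simp only [hq'1, hq'2]
          have := transfer (a := q y₁) (b := q y₂) (δ := δ) (by linarith) (le_of_lt hδ0) hle
          linarith
        -- interior set shrinks strictly
        have hsub : (univ.filter (fun y => 0 < q' y ∧ q' y < m)) ⊆
            (univ.filter (fun y => 0 < q y ∧ q y < m)) := by
          intro y hy
          simp only [Finset.mem_filter, Finset.mem_univ, true_and] at hy ⊢
          by_cases h1 : y = y₁
          · subst h1; exact hi1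
          by_cases h2 : y = y₂
          · subst h2; exact hi2
          · rwa [hq'o y h1 h2] at hy
        have hwit : ∃ w, w ∈ (univ.filter (fun y => 0 < q y ∧ q y < m)) ∧
            w ∉ (univ.filter (fun y => 0 < q' y ∧ q' y < m)) := by
          rcases le_total (m - q y₁) (q y₂) with hc | hc
          · refine ⟨y₁, ?_, ?_⟩
            · simp only [Finset.mem_filter, Finset.mem_univ, true_and]; exact hi1
            · simp only [Finset.mem_filter, Finset.mem_univ, true_and, not_and]
              intro _
              rw [hq'1, hδdef, min_eq_left hc]
              simp
          · refine ⟨y₂, ?_, ?_⟩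
            · simp only [Finset.mem_filter, Finset.mem_univ, true_and]; exact hi2
            · simp only [Finset.mem_filter, Finset.mem_univ, true_and, not_and]
              intro h
              exfalso
              rw [hq'2, hδdef, min_eq_right hc] at h
              simp at h
        obtain ⟨w, hw1, hw2⟩ := hwit
        have hss : (univ.filter (fun y => 0 < q' y ∧ q' y < m)) ⊂
            (univ.filter (fun y => 0 < q y ∧ q y < m)) :=
          Finset.ssubset_iff_of_subset hsub |>.mpr ⟨w, hw1, hw2⟩
        have hcard' : (univ.filter (fun y => 0 < q' y ∧ q' y < m)).card ≤ n := by
          have := Finset.card_lt_card hss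
          omega
        exact le_trans (IH q' hq'0 hq'sum hq'm hcard') hent
      · apply base_case hk hm0 hm1 q hq0 hq1 hqm
        intro y₁ y₂ hne h1 h2
        apply hex
        rcases le_total (q y₂) (q y₁) with h | h
        · exact ⟨y₁, y₂, hne, h1, h2, h⟩
        · exact ⟨y₂, y₁, hne.symm, h2, h1, h⟩
  exact aux _ q hq0 hq1 hqm le_rfl

/-- Scaled version of the per-letter bound, for a subprobability vector of total mass `c`. -/
lemma scaled_bound {𝒴 : Type*} [Fintype 𝒴] {k : ℕ} (hk : 1 ≤ k) (q : 𝒴 → ℝ)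
    (hq0 : ∀ y, 0 ≤ q y) {c : ℝ} (hc : ∑ y, q y = c) {M : ℝ}
    (hM : ∀ y, q y ≤ M) (hMmem : ∃ y, q y = M) :
    Ck k * c - sk k * M ≤ ∑ y, (Real.negMulLog (q y) + q y * Real.log c) := by
  have hc0 : 0 ≤ c := hc ▸ Finset.sum_nonneg (fun y _ => hq0 y)
  rcases eq_or_lt_of_le hc0 with h0 | hcpos
  · have hall : ∀ y, q y = 0 := by
      intro y
      have := (Finset.sum_eq_zero_iff_of_nonneg (fun y _ => hq0 y)).mp (hc.trans h0.symm)
      exact this y (Finset.mem_univ y)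
    obtain ⟨y₀, hy₀⟩ := hMmem
    have hM0 : M = 0 := by rw [← hy₀, hall y₀]
    rw [hM0, ← h0]
    simp [hall]
  · have hMpos : 0 < M := by
      by_contra h
      push_neg at h
      have hz : ∀ y, q y = 0 := fun y => le_antisymm (le_trans (hM y) h) (hq0 y)
      rw [Finset.sum_eq_zero (fun y _ => hz y)] at hc
      linarith
    have hMc : M ≤ c := by
      obtain ⟨y₀, hy₀⟩ := hMmem
      rw [← hy₀, ← hc]
      exact Finset.single_le_sum (fun y _ => hq0 y) (Finset.mem_univ y₀)
    have hm0 : 0 < M / c := by positivity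
    have hm1 : M / c ≤ 1 := by rw [div_le_one hcpos]; exact hMc
    have hpb := pmf_bound hk hm0 hm1 (fun y => q y / c)
      (fun y => div_nonneg (hq0 y) hc0)
      (by rw [← Finset.sum_div, hc, div_self (ne_of_gt hcpos)])
      (fun y => by show q y / c ≤ M / c; exact (div_le_div_iff_of_pos_right hcpos).mpr (hM y))
    have hper : ∀ y, c * Real.negMulLog (q y / c) = Real.negMulLog (q y) + q y * Real.log c := by
      intro y
      rcases eq_or_lt_of_le (hq0 y) with h | h
      · rw [← h]; simp [Real.negMulLog]
      · rw [Real.negMulLog, Real.negMulLog, Real.log_div (ne_of_gt h) (ne_of_gt hcpos)]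
        field_simp
        ring
    calc Ck k * c - sk k * M = c * (Ck k - sk k * (M/c)) := by field_simp
    _ ≤ c * ∑ y, Real.negMulLog (q y / c) := mul_le_mul_of_nonneg_left hpb (le_of_lt hcpos)
    _ = ∑ y, (Real.negMulLog (q y) + q y * Real.log c) := by
        rw [Finset.mul_sum]
        exact Finset.sum_congr rfl (fun y _ => hper y)

/-- **Reverse Fano (Kovalevsky) bound.** If `ε` is the minimum error probability
`P(g(Z) ≠ Y)` over all deterministic decoders `g`, and `ε ∈ (0,1)`, then
`H(Y|Z) ≥ (1-(1-ε)⌊1/(1-ε)⌋)(1+⌊1/(1-ε)⌋)ln(1+⌊1/(1-ε)⌋)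
          - (ε-(1-ε)⌊1/(1-ε)⌋)⌊1/(1-ε)⌋ln⌊1/(1-ε)⌋` (entropy in nats). -/
theorem reverse_fano {Ω 𝒴 𝒵 : Type*} [Fintype Ω] [Fintype 𝒴] [Fintype 𝒵]
    (p : Ω → ℝ) (hp : IsPMF p) (Y : Ω → 𝒴) (Z : Ω → 𝒵)
    (ε : ℝ)
    (hε : IsLeast {e : ℝ | ∃ g : 𝒵 → 𝒴, e = prob p (fun ω => g (Z ω) ≠ Y ω)} ε)
    (hε0 : 0 < ε) (hε1 : ε < 1) :
    (1 - (1 - ε) * (⌊1 / (1 - ε)⌋ : ℝ)) * (1 + (⌊1 / (1 - ε)⌋ : ℝ)) *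
        Real.log (1 + (⌊1 / (1 - ε)⌋ : ℝ))
      - (ε - (1 - ε) * (⌊1 / (1 - ε)⌋ : ℝ)) * (⌊1 / (1 - ε)⌋ : ℝ) *
        Real.log (⌊1 / (1 - ε)⌋ : ℝ)
      ≤ condEnt p Y Z := by
  have h1e : 0 < 1 - ε := by linarith
  set PP : 𝒴 × 𝒵 → ℝ := dist' p (fun ω => (Y ω, Z ω)) with hPP
  -- nonnegativity of the joint
  have hPP0 : ∀ a : 𝒴 × 𝒵, 0 ≤ PP a := by
    intro a
    exact Finset.sum_nonneg (fun ω _ => hp.1 ω)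
  -- marginal identity
  have F2 : ∀ z, ∑ y, PP (y, z) = dist' p Z z := by
    intro z
    simp only [hPP, dist', Finset.sum_filter]
    rw [Finset.sum_comm]
    apply Finset.sum_congr rfl
    intro ω _
    rw [Finset.sum_eq_single (Y ω)]
    · simp [Prod.ext_iff]
    · intro b _ hb
      rw [if_neg]
      simp only [Prod.mk.injEq, not_and]
      intro h; exact absurd h.symm hb
    · intro h; exact absurd (Finset.mem_univ _) h
  -- total mass of the Z-marginal
  have F3 : ∑ z, dist' p Z z = 1 := by
    simp only [dist', Finset.sum_filter]
    rw [Finset.sum_comm]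
    rw [← hp.2]
    apply Finset.sum_congr rfl
    intro ω _
    rw [Finset.sum_ite_eq]
    simp
  -- error probability of a decoder
  have F4 : ∀ g : 𝒵 → 𝒴, prob p (fun ω => g (Z ω) ≠ Y ω) = 1 - ∑ z, PP (g z, z) := by
    intro g
    have key : ∑ z, PP (g z, z) = ∑ ω ∈ Finset.univ.filter (fun ω => ¬ g (Z ω) ≠ Y ω), p ω := by
      simp only [hPP, dist', Finset.sum_filter]
      rw [Finset.sum_comm]
      apply Finset.sum_congr rfl
      intro ω _
      rw [Finset.sum_eq_single (Z ω)]
      · by_cases h : g (Z ω) = Y ω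
        · have c1 : (Y ω, Z ω) = (g (Z ω), Z ω) := by rw [h]
          rw [if_pos c1, if_pos (by simp [h])]
        · rw [if_neg, if_neg]
          · simpa using h
          · simp only [Prod.mk.injEq, not_and]
            intro h'; exact absurd h'.symm h
      · intro b _ hb
        rw [if_neg]
        simp only [Prod.mk.injEq, not_and]
        intro _ h; exact hb h.symm
      · intro h; exact absurd (Finset.mem_univ _) h
    simp only [prob]
    rw [key, eq_sub_iff_add_eq]
    simp only [Finset.sum_filter]
    rw [← hp.2, ← Finset.sum_add_distrib]
    apply Finset.sum_congr rfl
    intro ω _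
    by_cases h : g (Z ω) ≠ Y ω <;> simp [h]
  -- nonemptiness
  have hΩ : Nonempty Ω := by
    rcases isEmpty_or_nonempty Ω with h | h
    · have := hp.2
      rw [Finset.univ_eq_empty] at this
      simp at this
    · exact h
  obtain ⟨g₀, hg₀⟩ := hε.1
  have hY : Nonempty 𝒴 := ⟨g₀ (Z (Classical.arbitrary Ω))⟩
  -- MAP decoder
  have hgmax : ∀ z : 𝒵, ∃ ym : 𝒴, ∀ y, PP (y, z) ≤ PP (ym, z) := by
    intro z
    obtain ⟨b, _, hb⟩ := Finset.exists_max_image (Finset.univ : Finset 𝒴)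
      (fun y => PP (y, z)) Finset.univ_nonempty
    exact ⟨b, fun y => hb y (Finset.mem_univ y)⟩
  choose gm hgm using hgmax
  -- total maximal mass equals 1 - ε
  have hub : ε ≤ 1 - ∑ z, PP (gm z, z) := by
    have hmem : prob p (fun ω => gm (Z ω) ≠ Y ω) ∈
        {e : ℝ | ∃ g : 𝒵 → 𝒴, e = prob p (fun ω => g (Z ω) ≠ Y ω)} := ⟨gm, rfl⟩
    have := hε.2 hmem
    rwa [F4 gm] at this
  have hlb : 1 - ∑ z, PP (gm z, z) ≤ ε := by
    rw [hg₀, F4 g₀]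
    have : ∑ z, PP (g₀ z, z) ≤ ∑ z, PP (gm z, z) :=
      Finset.sum_le_sum (fun z _ => hgm z (g₀ z))
    linarith
  have hsumM : ∑ z, PP (gm z, z) = 1 - ε := by linarith
  -- conditional entropy decomposition
  have hYZ : ent p (fun ω => (Y ω, Z ω)) = -∑ z, ∑ y, PP (y, z) * Real.log (PP (y, z)) := by
    rw [ent, entFun]
    congr 1
    rw [← hPP, Fintype.sum_prod_type]
    exact Finset.sum_comm
  have hZ : ent p Z = -∑ z, ∑ y, PP (y, z) * Real.log (dist' p Z z) := by
    rw [ent, entFun]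
    congr 1
    apply Finset.sum_congr rfl
    intro z _
    rw [← F2 z, Finset.sum_mul]
  have hCE : condEnt p Y Z =
      ∑ z, ∑ y, (Real.negMulLog (PP (y, z)) + PP (y, z) * Real.log (dist' p Z z)) := by
    rw [condEnt, hYZ, hZ]
    simp only [Real.negMulLog_eq_neg, Finset.sum_add_distrib, Finset.sum_neg_distrib]
    ring
  -- the integer k
  set K : ℕ := (⌊1 / (1 - ε)⌋).toNat with hKdef
  have hfl1 : (1:ℤ) ≤ ⌊1 / (1 - ε)⌋ := by
    apply Int.le_floor.mpr
    push_cast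
    exact one_le_one_div h1e (by linarith)
  have hK1 : 1 ≤ K := by omega
  have hcast : ((K:ℕ):ℝ) = ((⌊1 / (1 - ε)⌋ : ℤ) : ℝ) := by
    rw [hKdef]
    exact_mod_cast congrArg (Int.cast : ℤ → ℝ) (Int.toNat_of_nonneg (by omega))
  -- per-letter bound summed over z
  have hmain : Ck K - sk K * (1 - ε) ≤ condEnt p Y Z := by
    rw [hCE]
    have hper : ∀ z : 𝒵,
        Ck K * dist' p Z z - sk K * PP (gm z, z) ≤
        ∑ y, (Real.negMulLog (PP (y, z)) + PP (y, z) * Real.log (dist' p Z z)) := by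
      intro z
      exact scaled_bound hK1 (fun y => PP (y, z)) (fun y => hPP0 (y, z)) (F2 z)
        (fun y => hgm z y) ⟨gm z, rfl⟩
    calc Ck K - sk K * (1 - ε)
        = ∑ z, (Ck K * dist' p Z z - sk K * PP (gm z, z)) := by
          rw [Finset.sum_sub_distrib, ← Finset.mul_sum, ← Finset.mul_sum, F3, hsumM]
          ring
    _ ≤ _ := Finset.sum_le_sum (fun z _ => hper z)
  -- final algebra
  have halg : (1 - (1 - ε) * (⌊1 / (1 - ε)⌋ : ℝ)) * (1 + (⌊1 / (1 - ε)⌋ : ℝ)) *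
        Real.log (1 + (⌊1 / (1 - ε)⌋ : ℝ))
      - (ε - (1 - ε) * (⌊1 / (1 - ε)⌋ : ℝ)) * (⌊1 / (1 - ε)⌋ : ℝ) *
        Real.log (⌊1 / (1 - ε)⌋ : ℝ) = Ck K - sk K * (1 - ε) := by
    rw [← hcast]
    rw [show (1:ℝ) + (K:ℝ) = (K:ℝ) + 1 by ring]
    unfold Ck sk
    ring
  rw [halg]
  exact hmain
end
end

section
/- Consider a deterministic binary classification where Y = 1{g_exp ⊆ G} for a fixed subgraph g_exp, with the classifier f(G) = 1{g_exp ⊆ G}, and a stochastic explanation Ψ_p that outputs g_exp with probability p and the empty graph with probability 1−p whenever g_exp ⊆ G (and empty otherwise). If p₁ ≥ p₂ then I(Ŷ; G | 1_{Ψ_{p₁}(G)}) ≤ I(Ŷ; G | 1_{Ψ_{p₂}(G)}); i.e., the conditional mutual information is nonincreasing in p. -/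
open Real Finset
open scoped Classical

noncomputable section

/- ### Auxiliary lemmas -/

/-- Entropy is invariant under injective relabeling. -/
lemma ent_comp_inj {Ω α β : Type*} [Fintype Ω] [Fintype α] [Fintype β]
    (p : Ω → ℝ) (Z : Ω → β) (ψ : β → α) (hψ : Function.Injective ψ) :
    ent p (fun ω => ψ (Z ω)) = ent p Z := by
  unfold ent entFun
  congr 1
  have h0 : ∀ a ∈ (Finset.univ : Finset α), a ∉ Finset.univ.image ψ →
      dist' p (fun ω => ψ (Z ω)) a * Real.log (dist' p (fun ω => ψ (Z ω)) a) = 0 := by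
    intro a _ ha
    have : dist' p (fun ω => ψ (Z ω)) a = 0 := by
      unfold dist'
      have : Finset.univ.filter (fun ω => ψ (Z ω) = a) = ∅ := by
        refine Finset.filter_eq_empty_iff.mpr ?_
        intro ω _ h
        exact ha (Finset.mem_image.mpr ⟨Z ω, Finset.mem_univ _, h⟩)
      rw [this, Finset.sum_empty]
    rw [this, zero_mul]
  rw [← Finset.sum_subset (Finset.subset_univ (Finset.univ.image ψ)) h0]
  rw [Finset.sum_image (fun b _ c _ h => hψ h)]
  refine Finset.sum_congr rfl fun b _ => ?_
  have : dist' p (fun ω => ψ (Z ω)) (ψ b) = dist' p Z b := by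
    unfold dist'
    congr 1
    ext ω
    simp [hψ.eq_iff]
  rw [this]

/-- If `X` is a function of `Z`, then `H(X | Z) = 0`. -/
lemma condEnt_of_comp {Ω α β : Type*} [Fintype Ω] [Fintype α] [Fintype β]
    (p : Ω → ℝ) (Z : Ω → β) (φ : β → α) :
    condEnt p (fun ω => φ (Z ω)) Z = 0 := by
  unfold condEnt
  have := ent_comp_inj p Z (fun b => (φ b, b)) (fun b c h => congrArg Prod.snd h)
  rw [this, sub_self]

lemma dist'_prod_eq {Ω α : Type*} [Fintype Ω] [Fintype α]
    (μ : Ω × Bool → ℝ) (X : Ω × Bool → α) (a : α) :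
    dist' μ X a = ∑ ω : Ω, ((if X (ω, true) = a then μ (ω, true) else 0) +
      (if X (ω, false) = a then μ (ω, false) else 0)) := by
  rw [dist', Finset.sum_filter, Fintype.sum_prod_type]
  exact Finset.sum_congr rfl fun ω _ => by rw [Fintype.sum_bool]

/-- Key convexity inequality for `g x = x log x`. -/
lemma key_ineq (a b c : ℝ) (ha : 0 ≤ a) (hab : a ≤ b) (hc : 0 ≤ c) :
    (a + c) * Real.log (a + c) - a * Real.log a ≤
      (b + c) * Real.log (b + c) - b * Real.log b := by
  rcases eq_or_lt_of_le (show a ≤ b + c by linarith) with h | h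
  · have hb : b = a := by linarith
    have hc0 : c = 0 := by linarith
    simp [hb, hc0]
  · set s := b + c - a with hs
    have hs0 : 0 < s := by linarith
    set l := (b - a) / s with hl
    set m := c / s with hm
    have hl0 : 0 ≤ l := div_nonneg (by linarith) hs0.le
    have hm0 : 0 ≤ m := div_nonneg hc hs0.le
    have hsum : l + m = 1 := by rw [hl, hm]; field_simp [hs0.ne']; rw [hs]; ring
    have hbc : (0:ℝ) ≤ b + c := by linarith
    have conv := Real.convexOn_mul_log
    have e1 : l * a + m * (b + c) = a + c := by
      rw [hl, hm]; field_simp [hs0.ne']; rw [hs]; ring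
    have e2 : m * a + l * (b + c) = b := by
      rw [hl, hm]; field_simp [hs0.ne']; rw [hs]; ring
    have h1 := conv.2 (Set.mem_Ici.mpr ha) (Set.mem_Ici.mpr hbc) hl0 hm0 hsum
    have h2 := conv.2 (Set.mem_Ici.mpr ha) (Set.mem_Ici.mpr hbc) hm0 hl0
      (by linarith : m + l = 1)
    simp only [smul_eq_mul] at h1 h2
    rw [e1] at h1
    rw [e2] at h2
    have hx : l * (a * Real.log a) + m * ((b + c) * Real.log (b + c))
        + (m * (a * Real.log a) + l * ((b + c) * Real.log (b + c)))
        = a * Real.log a + (b + c) * Real.log (b + c) := by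
      linear_combination (a * Real.log a + (b + c) * Real.log (b + c)) * hsum
    linarith [h1, h2, hx]

/-- Closed form of the conditional mutual information in the scenario. -/
lemma condMI_eval {Ω 𝒢 : Type*} [Fintype Ω] [Fintype 𝒢]
    (p : Ω → ℝ) (hp : IsPMF p) (G : Ω → 𝒢) (contains : 𝒢 → Bool) (t : ℝ)
    (q : ℝ) (hq : q = ∑ ω ∈ Finset.univ.filter (fun ω => contains (G ω) = true), p ω) :
    condMI (fun x : Ω × Bool => p x.1 * (if x.2 then t else 1 - t))
        (fun x => contains (G x.1)) (fun x => G x.1)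
        (fun x => contains (G x.1) && x.2)
      = (1 - q * t) * Real.log (1 - q * t) - (q * (1 - t)) * Real.log (q * (1 - t))
        - (1 - q) * Real.log (1 - q) := by
  set μ : Ω × Bool → ℝ := fun x => p x.1 * (if x.2 then t else 1 - t) with hμ
  have hqtrue : ∑ ω : Ω, (if contains (G ω) = true then p ω else 0) = q := by
    rw [hq, Finset.sum_filter]
  have hqfalse : ∑ ω : Ω, (if contains (G ω) = false then p ω else 0) = 1 - q := by
    have := hp.2
    have hsplit : (∑ ω : Ω, (if contains (G ω) = true then p ω else 0)) +
        (∑ ω : Ω, (if contains (G ω) = false then p ω else 0)) = ∑ ω : Ω, p ω := by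
      rw [← Finset.sum_add_distrib]
      refine Finset.sum_congr rfl fun ω _ => ?_
      cases h : contains (G ω) <;> simp [h]
    rw [hqtrue, hp.2] at hsplit
    linarith
  -- second conditional entropy vanishes
  have hzero : condEnt μ (fun x : Ω × Bool => contains (G x.1))
      (fun x : Ω × Bool => (G x.1, contains (G x.1) && x.2)) = 0 := by
    exact condEnt_of_comp μ (fun x : Ω × Bool => (G x.1, contains (G x.1) && x.2))
      (fun v => contains v.1)
  -- distribution of W
  have hWt : dist' μ (fun x : Ω × Bool => contains (G x.1) && x.2) true = q * t := by
    rw [dist'_prod_eq]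
    trans (∑ ω : Ω, (if contains (G ω) = true then p ω else 0) * t)
    · refine Finset.sum_congr rfl fun ω _ => ?_
      cases h : contains (G ω) <;> simp [hμ, h]
    · rw [← Finset.sum_mul, hqtrue]
  have hWf : dist' μ (fun x : Ω × Bool => contains (G x.1) && x.2) false = 1 - q * t := by
    rw [dist'_prod_eq]
    trans (∑ ω : Ω, ((if contains (G ω) = false then p ω else 0) * t + p ω * (1 - t)))
    · refine Finset.sum_congr rfl fun ω _ => ?_
      cases h : contains (G ω) <;> simp [hμ, h]
    · rw [Finset.sum_add_distrib, ← Finset.sum_mul, hqfalse, ← Finset.sum_mul, hp.2]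
      ring
  -- joint distribution of (X, W)
  have hJtt : dist' μ (fun x : Ω × Bool => (contains (G x.1), contains (G x.1) && x.2))
      (true, true) = q * t := by
    rw [dist'_prod_eq]
    trans (∑ ω : Ω, (if contains (G ω) = true then p ω else 0) * t)
    · refine Finset.sum_congr rfl fun ω _ => ?_
      cases h : contains (G ω) <;> simp [hμ, h]
    · rw [← Finset.sum_mul, hqtrue]
  have hJtf : dist' μ (fun x : Ω × Bool => (contains (G x.1), contains (G x.1) && x.2))
      (true, false) = q * (1 - t) := by
    rw [dist'_prod_eq]
    trans (∑ ω : Ω, (if contains (G ω) = true then p ω else 0) * (1 - t))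
    · refine Finset.sum_congr rfl fun ω _ => ?_
      cases h : contains (G ω) <;> simp [hμ, h]
    · rw [← Finset.sum_mul, hqtrue]
  have hJft : dist' μ (fun x : Ω × Bool => (contains (G x.1), contains (G x.1) && x.2))
      (false, true) = 0 := by
    rw [dist'_prod_eq]
    refine Finset.sum_eq_zero fun ω _ => ?_
    cases h : contains (G ω) <;> simp [hμ, h]
  have hJff : dist' μ (fun x : Ω × Bool => (contains (G x.1), contains (G x.1) && x.2))
      (false, false) = 1 - q := by
    rw [dist'_prod_eq]
    trans (∑ ω : Ω, (if contains (G ω) = false then p ω else 0) * (t + (1 - t)))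
    · refine Finset.sum_congr rfl fun ω _ => ?_
      cases h : contains (G ω) <;> simp [hμ, h] <;> ring
    · rw [← Finset.sum_mul, hqfalse]
      ring
  -- put everything together
  have hentW : ent μ (fun x : Ω × Bool => contains (G x.1) && x.2)
      = -((q * t) * Real.log (q * t) + (1 - q * t) * Real.log (1 - q * t)) := by
    unfold ent entFun
    rw [Fintype.sum_bool, hWt, hWf]
  have hentJ : ent μ (fun x : Ω × Bool => (contains (G x.1), contains (G x.1) && x.2))
      = -((q * t) * Real.log (q * t) + (q * (1 - t)) * Real.log (q * (1 - t))
          + (1 - q) * Real.log (1 - q)) := by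
    unfold ent entFun
    rw [Fintype.sum_prod_type, Fintype.sum_bool, Fintype.sum_bool, Fintype.sum_bool,
      hJtt, hJtf, hJft, hJff]
    simp only [zero_mul]
    ring
  unfold condMI
  rw [hzero, sub_zero]
  unfold condEnt
  rw [hentJ, hentW]
  ring

/-- In the deterministic classification scenario with `Y = 1{g_exp ⊆ G}`,
classifier `f(G) = 1{g_exp ⊆ G}` and the stochastic explanation `Ψ_p` that
outputs `g_exp` with probability `p` (and `∅` otherwise) whenever `g_exp ⊆ G`:
the conditional mutual information `I(Ŷ; G | 1_{Ψ_p(G)})` is nonincreasing in `p`.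
The stochastic explanation is modeled by an independent Bernoulli(`p`) coin on the
extended sample space `Ω × Bool`, with the indicator `1_{Ψ_p(G)}` equal to
`contains (G ω) && b`. -/
theorem condMI_antitone_in_p {Ω 𝒢 : Type*} [Fintype Ω] [Fintype 𝒢]
    (p : Ω → ℝ) (hp : IsPMF p) (G : Ω → 𝒢) (contains : 𝒢 → Bool)
    (p₁ p₂ : ℝ) (hp₂0 : 0 ≤ p₂) (hle : p₂ ≤ p₁) (hp₁1 : p₁ ≤ 1) :
    condMI (fun x : Ω × Bool => p x.1 * (if x.2 then p₁ else 1 - p₁))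
        (fun x => contains (G x.1)) (fun x => G x.1)
        (fun x => contains (G x.1) && x.2)
      ≤ condMI (fun x : Ω × Bool => p x.1 * (if x.2 then p₂ else 1 - p₂))
        (fun x => contains (G x.1)) (fun x => G x.1)
        (fun x => contains (G x.1) && x.2) := by
  set q : ℝ := ∑ ω ∈ Finset.univ.filter (fun ω => contains (G ω) = true), p ω with hq
  have hq0 : 0 ≤ q := Finset.sum_nonneg fun ω _ => hp.1 ω
  have hq1 : q ≤ 1 := by
    rw [hq, ← hp.2]
    exact Finset.sum_le_sum_of_subset_of_nonneg (Finset.subset_univ _)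
      (fun ω _ _ => hp.1 ω)
  rw [condMI_eval p hp G contains p₁ q hq, condMI_eval p hp G contains p₂ q hq]
  have h := key_ineq (q * (1 - p₁)) (q * (1 - p₂)) (1 - q)
    (mul_nonneg hq0 (by linarith)) (by nlinarith) (by linarith)
  have e1 : q * (1 - p₁) + (1 - q) = 1 - q * p₁ := by ring
  have e2 : q * (1 - p₂) + (1 - q) = 1 - q * p₂ := by ring
  rw [e1, e2] at h
  linarith

end
end
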